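/- The function σ ↦ 2 - (e^σ - 1)/σ (extended by the value 1 at σ = 0) is strictly decreasing and concave on (0,∞), equals 1 at σ = 0, and has a unique positive root σ₀ satisfying 1.2564 < σ₀ < 1.2565. In particular, 2 - (e^σ - 1)/σ > 0 for all 0 < σ < 1.2564. -/

import Mathlib

/-- The function σ ↦ 2 - (e^σ - 1)/σ, extended by 1 at σ = 0. -/
noncomputable def phiCrit (σ : ℝ) : ℝ := if σ = 0 then 1 else 2 - (Real.exp σ - 1) / σ

/-- The entire function (e^σ - 1)/σ as a power series sum. -/
noncomputable def phiS (σ : ℝ) : ℝ := ∑' k : ℕ, σ ^ k / (k + 1).factorial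

lemma phiS_summable (σ : ℝ) : Summable (fun k : ℕ => σ ^ k / (k + 1).factorial) := by
  have h : Summable (fun k : ℕ => |σ| ^ k / k.factorial) := Real.summable_pow_div_factorial _
  refine Summable.of_abs (Summable.of_nonneg_of_le (fun k => abs_nonneg _) (fun k => ?_) h)
  rw [abs_div, abs_pow, Nat.abs_cast]
  gcongr
  exact Nat.le_succ k

lemma exp_eq_phiS (σ : ℝ) : Real.exp σ = 1 + σ * phiS σ := by
  have hsum : Summable (fun n : ℕ => σ ^ n / n.factorial) :=
    Real.summable_pow_div_factorial σ
  have h1 : Real.exp σ = ∑' n : ℕ, σ ^ n / n.factorial := by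
    rw [Real.exp_eq_exp_ℝ, NormedSpace.exp_eq_tsum_div]
  rw [h1, Summable.tsum_eq_zero_add hsum]
  simp only [pow_zero, Nat.factorial_zero, Nat.cast_one, div_one]
  congr 1
  have : ∀ k : ℕ, σ ^ (k + 1) / ((k + 1).factorial : ℝ)
      = σ * (σ ^ k / (k + 1).factorial) := by
    intro k; rw [pow_succ]; ring
  rw [show (fun k : ℕ => σ ^ (k + 1) / ((k + 1).factorial : ℝ))
      = fun k : ℕ => σ * (σ ^ k / (k + 1).factorial) from funext this,
    tsum_mul_left]
  rfl

lemma phiCrit_eq (σ : ℝ) (hσ : σ ≠ 0) : phiCrit σ = 2 - phiS σ := by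
  rw [phiCrit, if_neg hσ, exp_eq_phiS]
  field_simp
  ring

lemma phiS_strictMono : StrictMonoOn phiS (Set.Ici 0) := by
  intro a ha b hb hab
  have ha' : (0:ℝ) ≤ a := ha
  refine Summable.tsum_lt_tsum_of_nonneg (i := 1)
    (fun k => div_nonneg (pow_nonneg ha' k) (by positivity))
    (fun k => by gcongr) ?_ (phiS_summable b)
  simp only [pow_one]
  gcongr

theorem phiCrit_properties :
    StrictAntiOn phiCrit (Set.Ioi 0) ∧
    ConcaveOn ℝ (Set.Ioi 0) phiCrit ∧
    phiCrit 0 = 1 ∧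
    (∃ σ₀ : ℝ, 1.2564 < σ₀ ∧ σ₀ < 1.2565 ∧ phiCrit σ₀ = 0 ∧
      ∀ σ : ℝ, 0 < σ → phiCrit σ = 0 → σ = σ₀) ∧
    ∀ σ : ℝ, 0 < σ → σ < 1.2564 → 0 < phiCrit σ := by
  -- strict antitonicity
  have hanti : StrictAntiOn phiCrit (Set.Ioi 0) := by
    intro a ha b hb hab
    rw [phiCrit_eq a (ne_of_gt ha), phiCrit_eq b (ne_of_gt hb)]
    have := phiS_strictMono (Set.mem_Ici.2 ha.le) (Set.mem_Ici.2 hb.le) hab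
    linarith
  -- concavity
  have hconc : ConcaveOn ℝ (Set.Ioi 0) phiCrit := by
    refine ⟨convex_Ioi 0, fun x hx y hy a b ha hb hab => ?_⟩
    simp only [smul_eq_mul] at *
    have hx0 : (0:ℝ) < x := hx
    have hy0 : (0:ℝ) < y := hy
    have hxy : 0 < a * x + b * y := by
      rcases eq_or_lt_of_le ha with h | h
      · rw [← h] at hab ⊢; simp at hab; simp [hab]; positivity
      · nlinarith
    rw [phiCrit_eq x (ne_of_gt hx0), phiCrit_eq y (ne_of_gt hy0),
      phiCrit_eq _ (ne_of_gt hxy)]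
    have hkey : phiS (a * x + b * y) ≤ a * phiS x + b * phiS y := by
      have hsum : ∀ t : ℝ, Summable (fun k : ℕ => t * (x ^ k / (k+1).factorial)) :=
        fun t => (phiS_summable x).mul_left t
      have hrhs : Summable (fun k : ℕ =>
          a * (x ^ k / (k+1).factorial) + b * (y ^ k / (k+1).factorial)) :=
        ((phiS_summable x).mul_left a).add ((phiS_summable y).mul_left b)
      have hle : ∀ k : ℕ, (a * x + b * y) ^ k / ((k+1).factorial : ℝ)
          ≤ a * (x ^ k / (k+1).factorial) + b * (y ^ k / (k+1).factorial) := by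
        intro k
        have hpow := (convexOn_pow (𝕜 := ℝ) k).2 (Set.mem_Ici.2 hx0.le)
          (Set.mem_Ici.2 hy0.le) ha hb hab
        simp only [smul_eq_mul] at hpow
        have hfac : (0:ℝ) < (k+1).factorial := by positivity
        rw [div_le_iff₀ hfac]
        calc (a * x + b * y) ^ k ≤ a * x ^ k + b * y ^ k := hpow
          _ = (a * (x ^ k / (k+1).factorial) + b * (y ^ k / (k+1).factorial))
              * (k+1).factorial := by field_simp
      calc phiS (a * x + b * y)
          ≤ ∑' k : ℕ, (a * (x ^ k / (k+1).factorial) + b * (y ^ k / (k+1).factorial)) :=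
            Summable.tsum_le_tsum hle (phiS_summable _) hrhs
        _ = a * phiS x + b * phiS y := by
            rw [Summable.tsum_add ((phiS_summable x).mul_left a) ((phiS_summable y).mul_left b),
              tsum_mul_left, tsum_mul_left]
            rfl
    linarith
  -- numeric bounds
  have hnum1 : Real.exp 1.2564 < 3.5128 := by
    have h12 : (1.2564 : ℝ) = 0.6282 + 0.6282 := by norm_num
    have hb : Real.exp 0.6282 ≤ (∑ m ∈ Finset.range 7, (0.6282:ℝ) ^ m / m.factorial)
        + (0.6282:ℝ) ^ 7 * 8 / (Nat.factorial 7 * 7) := by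
      have := Real.exp_bound' (x := 0.6282) (by norm_num) (by norm_num) (n := 7) (by norm_num)
      convert this using 3 <;> norm_num
    have hBval : (∑ m ∈ Finset.range 7, (0.6282:ℝ) ^ m / m.factorial)
        + (0.6282:ℝ) ^ 7 * 8 / (Nat.factorial 7 * 7) ≤ 1.87424 := by
      simp [Finset.sum_range_succ, Nat.factorial]
      norm_num
    have hB : Real.exp 0.6282 ≤ 1.87424 := hb.trans hBval
    rw [h12, Real.exp_add]
    calc Real.exp 0.6282 * Real.exp 0.6282 ≤ 1.87424 * 1.87424 :=
        mul_le_mul hB hB (Real.exp_pos _).le (by norm_num)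
      _ < 3.5128 := by norm_num
  have hnum2 : (3.5130 : ℝ) < Real.exp 1.2565 := by
    have h12 : (1.2565 : ℝ) = 0.62825 + 0.62825 := by norm_num
    have hb := Real.sum_le_exp_of_nonneg (x := 0.62825) (by norm_num) 7
    have hPval : (1.87431 : ℝ) ≤ ∑ m ∈ Finset.range 7, (0.62825:ℝ) ^ m / m.factorial := by
      simp [Finset.sum_range_succ, Nat.factorial]
      norm_num
    have hP : (1.87431 : ℝ) ≤ Real.exp 0.62825 := hPval.trans hb
    rw [h12, Real.exp_add]
    calc (3.5130 : ℝ) < 1.87431 * 1.87431 := by norm_num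
      _ ≤ Real.exp 0.62825 * Real.exp 0.62825 :=
        mul_le_mul hP hP (by norm_num) (Real.exp_pos _).le
  have hf1 : 0 < phiCrit 1.2564 := by
    rw [phiCrit, if_neg (by norm_num)]
    rw [sub_pos, div_lt_iff₀ (by norm_num : (0:ℝ) < 1.2564)]
    linarith
  have hf2 : phiCrit 1.2565 < 0 := by
    rw [phiCrit, if_neg (by norm_num)]
    rw [sub_neg, lt_div_iff₀ (by norm_num : (0:ℝ) < 1.2565)]
    linarith
  -- existence of the root via IVT
  have hcont : ContinuousOn phiCrit (Set.Icc 1.2564 1.2565) := by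
    apply ContinuousOn.congr (f := fun σ : ℝ => 2 - (Real.exp σ - 1) / σ)
    · apply ContinuousOn.sub continuousOn_const
      apply ContinuousOn.div
      · exact (Real.continuous_exp.continuousOn).sub continuousOn_const
      · exact continuousOn_id
      · intro x hx
        have : (1.2564:ℝ) ≤ x := hx.1
        intro h; rw [h] at this; norm_num at this
    · intro x hx
      have hx0 : x ≠ 0 := by
        have : (1.2564:ℝ) ≤ x := hx.1
        intro h; rw [h] at this; norm_num at this
      rw [phiCrit, if_neg hx0]
  obtain ⟨σ₀, hσ₀mem, hσ₀⟩ : ∃ σ₀ ∈ Set.Ioo (1.2564:ℝ) 1.2565, phiCrit σ₀ = 0 := by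
    have := intermediate_value_Ioo' (by norm_num : (1.2564:ℝ) ≤ 1.2565) hcont
    have h0 : (0:ℝ) ∈ Set.Ioo (phiCrit 1.2565) (phiCrit 1.2564) := ⟨hf2, hf1⟩
    obtain ⟨σ₀, hmem, heq⟩ := this h0
    exact ⟨σ₀, hmem, heq⟩
  have hσ₀pos : (0:ℝ) < σ₀ := by linarith [hσ₀mem.1]
  refine ⟨hanti, hconc, by simp [phiCrit], ⟨σ₀, hσ₀mem.1, hσ₀mem.2, hσ₀, ?_⟩, ?_⟩
  · intro σ hσ hσ0
    exact hanti.injOn (Set.mem_Ioi.2 hσ) (Set.mem_Ioi.2 hσ₀pos) (by rw [hσ0, hσ₀])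
  · intro σ hσpos hσlt
    have := hanti (Set.mem_Ioi.2 hσpos) (Set.mem_Ioi.2 (by norm_num : (0:ℝ) < 1.2564)) hσlt
    linarith
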